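/- The map φ(x,y) = (y(I+αxy)⁻¹(I+βxy), x(I+βyx)⁻¹(I+αyx)) on pairs of symmetric positive definite r×r matrices is an involution: φ(φ(x,y)) = (x,y). -/

import Mathlib

/-- The map `φ(x,y) = (y(I+αxy)⁻¹(I+βxy), x(I+βyx)⁻¹(I+αyx))` on pairs of
matrices. -/
noncomputable def phiMap {r : ℕ} (α β : ℝ)
    (p : Matrix (Fin r) (Fin r) ℝ × Matrix (Fin r) (Fin r) ℝ) :
    Matrix (Fin r) (Fin r) ℝ × Matrix (Fin r) (Fin r) ℝ :=
  (p.2 * (1 + α • (p.1 * p.2))⁻¹ * (1 + β • (p.1 * p.2)),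
   p.1 * (1 + β • (p.2 * p.1))⁻¹ * (1 + α • (p.2 * p.1)))

lemma smul_posSemidef {r : ℕ} {c : ℝ} (hc : 0 ≤ c) {y : Matrix (Fin r) (Fin r) ℝ}
    (hy : y.PosSemidef) : (c • y).PosSemidef := by
  have h1 : y.conjTranspose = y := hy.1
  refine ⟨?_, fun v => ?_⟩
  · show (c • y).conjTranspose = c • y
    rw [Matrix.conjTranspose_smul, h1]
    congr 1
  · have h2 : (v.sum fun i xi => v.sum fun j xj => star xi * (c • y) i j * xj) =
        c * (v.sum fun i xi => v.sum fun j xj => star xi * y i j * xj) := by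
      simp only [Finsupp.sum, Finset.mul_sum, Matrix.smul_apply, smul_eq_mul]
      exact Finset.sum_congr rfl fun i _ => Finset.sum_congr rfl fun j _ => by ring
    rw [h2]
    exact mul_nonneg hc (hy.2 v)

lemma isUnit_one_add_smul_mul {r : ℕ} {c : ℝ} (hc : 0 ≤ c)
    {x y : Matrix (Fin r) (Fin r) ℝ} (hx : x.PosDef) (hy : y.PosDef) :
    IsUnit (1 + c • (x * y)) := by
  have h1 : (1 + c • (x * y)) = x * (x⁻¹ + c • y) := by
    rw [Matrix.mul_add, Matrix.mul_nonsing_inv _ hx.det_pos.ne'.isUnit, mul_smul_comm]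
  have h2 : (x⁻¹ + c • y).PosDef := hx.inv.add_posSemidef (smul_posSemidef hc hy.posSemidef)
  rw [h1]
  exact hx.isUnit.mul h2.isUnit

lemma invOf_intertwine {R : Type*} [Monoid R] (p p' x : R) [Invertible p] [Invertible p']
    (h : p * x = x * p') : ⅟p * x = x * ⅟p' := by
  have h1 : ⅟p * x * p' = x := by rw [mul_assoc, ← h, ← mul_assoc, invOf_mul_self, one_mul]
  calc ⅟p * x = ⅟p * x * (p' * ⅟p') := by rw [mul_invOf_self, mul_one]
    _ = (⅟p * x * p') * ⅟p' := by rw [← mul_assoc]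
    _ = x * ⅟p' := by rw [h1]

/-- `φ` is an involution on pairs of symmetric positive definite matrices. -/
theorem phiMap_involution {r : ℕ} (α β : ℝ) (hα : 0 ≤ α) (hβ : 0 ≤ β)
    (x y : Matrix (Fin r) (Fin r) ℝ) (hx : x.PosDef) (hy : y.PosDef) :
    phiMap α β (phiMap α β (x, y)) = (x, y) := by
  simp only [phiMap]
  set A := x * y with hA
  set B := y * x with hB
  have hP : IsUnit (1 + α • A) := isUnit_one_add_smul_mul hα hx hy
  have hQ : IsUnit (1 + β • A) := isUnit_one_add_smul_mul hβ hx hy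
  have hP' : IsUnit (1 + α • B) := isUnit_one_add_smul_mul hα hy hx
  have hQ' : IsUnit (1 + β • B) := isUnit_one_add_smul_mul hβ hy hx
  letI := hP.invertible
  letI := hQ.invertible
  letI := hP'.invertible
  letI := hQ'.invertible
  have e1 : (1 + α • A)⁻¹ = ⅟(1 + α • A) := (Matrix.invOf_eq_nonsing_inv _).symm
  have e2 : (1 + β • A)⁻¹ = ⅟(1 + β • A) := (Matrix.invOf_eq_nonsing_inv _).symm
  have e3 : (1 + α • B)⁻¹ = ⅟(1 + α • B) := (Matrix.invOf_eq_nonsing_inv _).symm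
  have e4 : (1 + β • B)⁻¹ = ⅟(1 + β • B) := (Matrix.invOf_eq_nonsing_inv _).symm
  rw [e1, e4]
  -- intertwining identities
  have hAx : A * x = x * B := by rw [hA, hB, Matrix.mul_assoc]
  have hBy : B * y = y * A := by rw [hA, hB, Matrix.mul_assoc]
  have hQx : (1 + β • A) * x = x * (1 + β • B) := by
    rw [add_mul, mul_add, one_mul, mul_one, smul_mul_assoc, mul_smul_comm, hAx]
  have hP'y : (1 + α • B) * y = y * (1 + α • A) := by
    rw [add_mul, mul_add, one_mul, mul_one, smul_mul_assoc, mul_smul_comm, hBy]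
  have hPx : (1 + α • A) * x = x * (1 + α • B) := by
    rw [add_mul, mul_add, one_mul, mul_one, smul_mul_assoc, mul_smul_comm, hAx]
  have hQ'y : (1 + β • B) * y = y * (1 + β • A) := by
    rw [add_mul, mul_add, one_mul, mul_one, smul_mul_assoc, mul_smul_comm, hBy]
  have hiPx : ⅟(1 + α • A) * x = x * ⅟(1 + α • B) := invOf_intertwine _ _ _ hPx
  have hiQ'y : ⅟(1 + β • B) * y = y * ⅟(1 + β • A) := invOf_intertwine _ _ _ hQ'y
  set u := y * ⅟(1 + α • A) * (1 + β • A) with hu'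
  set v := x * ⅟(1 + β • B) * (1 + α • B) with hv'
  have huv : u * v = B := by
    calc u * v = y * (⅟(1 + α • A) * ((1 + β • A) * x * (⅟(1 + β • B) * (1 + α • B)))) := by
          rw [hu', hv']; simp only [Matrix.mul_assoc]
      _ = y * (⅟(1 + α • A) * (x * ((1 + β • B) * ⅟(1 + β • B) * (1 + α • B)))) := by
          rw [hQx]; simp only [Matrix.mul_assoc]
      _ = y * (⅟(1 + α • A) * (x * (1 + α • B))) := by
          rw [mul_invOf_self, Matrix.one_mul]
      _ = y * (x * (⅟(1 + α • B) * (1 + α • B))) := by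
          rw [← Matrix.mul_assoc (⅟(1 + α • A)) x, hiPx]; simp only [Matrix.mul_assoc]
      _ = B := by rw [invOf_mul_self, Matrix.mul_one, hB]
  have hvu : v * u = A := by
    calc v * u = x * (⅟(1 + β • B) * ((1 + α • B) * y * (⅟(1 + α • A) * (1 + β • A)))) := by
          rw [hu', hv']; simp only [Matrix.mul_assoc]
      _ = x * (⅟(1 + β • B) * (y * ((1 + α • A) * ⅟(1 + α • A) * (1 + β • A)))) := by
          rw [hP'y]; simp only [Matrix.mul_assoc]
      _ = x * (⅟(1 + β • B) * (y * (1 + β • A))) := by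
          rw [mul_invOf_self, Matrix.one_mul]
      _ = x * (y * (⅟(1 + β • A) * (1 + β • A))) := by
          rw [← Matrix.mul_assoc (⅟(1 + β • B)) y, hiQ'y]; simp only [Matrix.mul_assoc]
      _ = A := by rw [invOf_mul_self, Matrix.mul_one, hA]
  rw [Prod.mk.injEq, huv, hvu, e2, e3]
  constructor
  · calc v * ⅟(1 + α • B) * (1 + β • B)
        = x * (⅟(1 + β • B) * ((1 + α • B) * ⅟(1 + α • B) * (1 + β • B))) := by
          rw [hv']; simp only [Matrix.mul_assoc]
      _ = x * (⅟(1 + β • B) * (1 + β • B)) := by rw [mul_invOf_self, Matrix.one_mul]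
      _ = x := by rw [invOf_mul_self, Matrix.mul_one]
  · calc u * ⅟(1 + β • A) * (1 + α • A)
        = y * (⅟(1 + α • A) * ((1 + β • A) * ⅟(1 + β • A) * (1 + α • A))) := by
          rw [hu']; simp only [Matrix.mul_assoc]
      _ = y * (⅟(1 + α • A) * (1 + α • A)) := by rw [mul_invOf_self, Matrix.one_mul]
      _ = y := by rw [invOf_mul_self, Matrix.mul_one]
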